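/- Let S be a type of states with an invariant I : S → Prop, let ops : Fin n → (S → S) be a finite family of operations that pairwise commute (ops i ∘ ops j = ops j ∘ ops i for all i, j), and let ≺ be a strict partial order on Fin n. Assume that for every index i, every I-valid initial state s₀, and every state T that is an admissible state for i from s₀, the state ops i T is I-valid. Then for every I-valid initial state s₀, all valid serializations of (ops, ≺) executed from s₀ yield one and the same final state, and this common final state is I-valid; that is, all replicas converge to the same invariant-preserving state. -/

import Mathlib

/-- Executing a list of operation indices from a state, by a left fold. -/
def exec {n : ℕ} {S : Type*} (ops : Fin n → S → S) (l : List (Fin n)) (s : S) : S :=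
  l.foldl (fun t i => ops i t) s

/-- A valid serialization of `(ops, ≺)`: a list containing every index of `Fin n`
exactly once, such that whenever `hb i j`, `i` occurs before `j` in the list. -/
def ValidSer {n : ℕ} (hb : Fin n → Fin n → Prop) (l : List (Fin n)) : Prop :=
  l.Nodup ∧ (∀ i : Fin n, i ∈ l) ∧
    ∀ i j : Fin n, hb i j → l.idxOf i < l.idxOf j

/-- `T` is an admissible state for index `i` from `s₀`: there is a valid
serialization `l` in which `i` occurs, and `T` results from executing from `s₀`
the prefix of `l` consisting of all entries strictly preceding `i`. -/
def Admissible {n : ℕ} {S : Type*} (ops : Fin n → S → S)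
    (hb : Fin n → Fin n → Prop) (i : Fin n) (s₀ T : S) : Prop :=
  ∃ l : List (Fin n), ValidSer hb l ∧ i ∈ l ∧
    T = exec ops (l.take (l.idxOf i)) s₀

/-- Under the hypotheses of Theorem 1, all replicas converge: all valid
serializations executed from an I-valid initial state yield one and the same
final state, and this common final state is I-valid. -/
theorem converge_to_valid_state {n : ℕ} {S : Type*} (I : S → Prop)
    (ops : Fin n → S → S) (hb : Fin n → Fin n → Prop)
    (hcomm : ∀ i j : Fin n, (ops i) ∘ (ops j) = (ops j) ∘ (ops i))
    (hirr : ∀ i : Fin n, ¬ hb i i)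
    (htrans : ∀ i j k : Fin n, hb i j → hb j k → hb i k)
    (hsafe : ∀ (i : Fin n) (s₀ T : S), I s₀ → Admissible ops hb i s₀ T → I (ops i T)) :
    ∀ s₀ : S, I s₀ →
      (∀ l₁ l₂ : List (Fin n), ValidSer hb l₁ → ValidSer hb l₂ →
        exec ops l₁ s₀ = exec ops l₂ s₀) ∧
      (∀ l : List (Fin n), ValidSer hb l → I (exec ops l s₀)) := by
  intro s₀ hI
  constructor
  · intro l₁ l₂ h₁ h₂
    have hperm : l₁.Perm l₂ := by
      refine List.perm_of_nodup_nodup_toFinset_eq h₁.1 h₂.1 ?_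
      ext x
      simp [List.mem_toFinset, h₁.2.1 x, h₂.2.1 x]
    haveI : RightCommutative (fun (t : S) (i : Fin n) => ops i t) := by
      constructor
      intro t a b
      exact congrFun (hcomm b a) t
    exact hperm.foldl_eq s₀
  · intro l hl
    rcases List.eq_nil_or_concat l with rfl | ⟨l', i, rfl⟩
    · exact hI
    · have hnotmem : i ∉ l' := by
        have := hl.1
        simp [List.concat_eq_append, List.nodup_append] at this
        exact fun hm => this.2 i hm rfl
      have hidx : (l' ++ [i]).idxOf i = l'.length := by
        rw [List.idxOf_append_of_notMem hnotmem]; simp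
      have hexec : exec ops (l' ++ [i]) s₀ = ops i (exec ops l' s₀) := by
        simp [exec, List.foldl_append]
      rw [List.concat_eq_append, hexec]
      refine hsafe i s₀ _ hI ⟨l' ++ [i], by simpa [List.concat_eq_append] using hl, by simp, ?_⟩
      rw [hidx, List.take_left]
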